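/- Let n ≥ 1 and suppose K, Γ, ω : ℝ → Mₙ(ℝ) are functions with K and Γ differentiable, satisfying K′(t) + [ω(t), K(t)] = 0 and Γ′(t) + [ω(t), Γ(t)] = 0 for all t, where [A,B] := AB − BA. Then for every pair of natural numbers s, l, the function t ↦ trace(K(t)^s · Γ(t)^l) is constant, and t ↦ trace(K(t)^s) is constant. -/

import Mathlib

open Matrix

private lemma matDeriv_mul {n : ℕ} {A B : ℝ → Matrix (Fin n) (Fin n) ℝ}
    {A' B' : Matrix (Fin n) (Fin n) ℝ} {t : ℝ}
    (hA : ∀ i j, HasDerivAt (fun s => A s i j) (A' i j) t)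
    (hB : ∀ i j, HasDerivAt (fun s => B s i j) (B' i j) t) :
    ∀ i j, HasDerivAt (fun s => (A s * B s) i j) ((A' * B t + A t * B') i j) t := by
  intro i j
  have hrw : ∀ s, (A s * B s) i j = ∑ k, A s i k * B s k j := fun s => Matrix.mul_apply
  simp only [hrw]
  have h : HasDerivAt (fun s => ∑ k, A s i k * B s k j)
      (∑ k, (A' i k * B t k j + A t i k * B' k j)) t :=
    HasDerivAt.fun_sum (fun k _ => (hA i k).mul (hB k j))
  have he : ((A' * B t + A t * B') i j) = ∑ k, (A' i k * B t k j + A t i k * B' k j) := by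
    simp [Matrix.add_apply, Matrix.mul_apply, Finset.sum_add_distrib]
  rw [he]; exact h

private lemma matDeriv_pow {n : ℕ} {A : ℝ → Matrix (Fin n) (Fin n) ℝ}
    {ω : Matrix (Fin n) (Fin n) ℝ} {t : ℝ}
    (hA : ∀ i j, HasDerivAt (fun s => A s i j) ((A t * ω - ω * A t) i j) t) (m : ℕ) :
    ∀ i j, HasDerivAt (fun s => (A s ^ m) i j) ((A t ^ m * ω - ω * A t ^ m) i j) t := by
  induction m with
  | zero =>
    intro i j
    simp only [pow_zero, one_mul, mul_one, sub_self, Matrix.zero_apply]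
    exact hasDerivAt_const t ((1 : Matrix (Fin n) (Fin n) ℝ) i j)
  | succ m ih =>
    intro i j
    have h := matDeriv_mul hA ih i j
    have heq : (A t ^ (m + 1) * ω - ω * A t ^ (m + 1))
        = ((A t * ω - ω * A t) * A t ^ m + A t * (A t ^ m * ω - ω * A t ^ m)) := by
      rw [pow_succ']; noncomm_ring
    have hrw : ∀ s, (A s ^ (m + 1)) i j = (A s * A s ^ m) i j := by
      intro s; rw [pow_succ']
    simp only [hrw, heq]
    exact h

/-- The first integrals (md2.19) of the `n`-dimensional Chaplygin sphere: along
solutions of `K̇ + [ω,K] = 0`, `Γ̇ + [ω,Γ] = 0`, all traces `tr(K^s Γ^l)` and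
`tr(K^s)` are conserved. -/
theorem chaplygin_sphere_trace_integrals
    (n : ℕ) (hn : 1 ≤ n)
    (K Γ ω : ℝ → Matrix (Fin n) (Fin n) ℝ)
    (hK : ∀ t i j, HasDerivAt (fun s => K s i j)
        (-((ω t * K t - K t * ω t) i j)) t)
    (hΓ : ∀ t i j, HasDerivAt (fun s => Γ s i j)
        (-((ω t * Γ t - Γ t * ω t) i j)) t) :
    ∀ (s l : ℕ) (t₁ t₂ : ℝ),
      (K t₁ ^ s * Γ t₁ ^ l).trace = (K t₂ ^ s * Γ t₂ ^ l).trace ∧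
      (K t₁ ^ s).trace = (K t₂ ^ s).trace := by
  intro s l t₁ t₂
  have hK' : ∀ t i j, HasDerivAt (fun u => K u i j) ((K t * ω t - ω t * K t) i j) t := by
    intro t i j
    have h := hK t i j
    have : ((K t * ω t - ω t * K t) i j) = -((ω t * K t - K t * ω t) i j) := by
      simp only [Matrix.sub_apply, Matrix.neg_apply]; ring
    rw [this]; exact h
  have hΓ' : ∀ t i j, HasDerivAt (fun u => Γ u i j) ((Γ t * ω t - ω t * Γ t) i j) t := by
    intro t i j
    have h := hΓ t i j
    have : ((Γ t * ω t - ω t * Γ t) i j) = -((ω t * Γ t - Γ t * ω t) i j) := by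
      simp only [Matrix.sub_apply, Matrix.neg_apply]; ring
    rw [this]; exact h
  have hprod : ∀ t i j, HasDerivAt (fun u => (K u ^ s * Γ u ^ l) i j)
      ((K t ^ s * Γ t ^ l * ω t - ω t * (K t ^ s * Γ t ^ l)) i j) t := by
    intro t i j
    have h := matDeriv_mul (matDeriv_pow (hK' t) s) (matDeriv_pow (hΓ' t) l) i j
    have heq : (K t ^ s * Γ t ^ l * ω t - ω t * (K t ^ s * Γ t ^ l))
        = ((K t ^ s * ω t - ω t * K t ^ s) * Γ t ^ l
            + K t ^ s * (Γ t ^ l * ω t - ω t * Γ t ^ l)) := by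
      noncomm_ring
    rw [heq]; exact h
  have key : ∀ (M : ℝ → Matrix (Fin n) (Fin n) ℝ),
      (∀ t i j, HasDerivAt (fun u => M u i j)
        ((M t * ω t - ω t * M t) i j) t) →
      (M t₁).trace = (M t₂).trace := by
    intro M hM
    have hfun : (fun u => (M u).trace) = fun u => ∑ i, M u i i := by
      funext u; simp [Matrix.trace, Matrix.diag]
    have htr : ∀ t, HasDerivAt (fun u => (M u).trace) 0 t := by
      intro t
      have h : HasDerivAt (fun u => ∑ i, M u i i)
          (∑ i, (M t * ω t - ω t * M t) i i) t :=
        HasDerivAt.fun_sum (fun i _ => hM t i i)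
      have hz : (∑ i, (M t * ω t - ω t * M t) i i) = 0 := by
        have htrc : (M t * ω t - ω t * M t).trace = 0 := by
          rw [Matrix.trace_sub, Matrix.trace_mul_comm, sub_self]
        simpa [Matrix.trace, Matrix.diag] using htrc
      rw [hfun, ← hz]; exact h
    have hd : Differentiable ℝ (fun u => (M u).trace) := fun u => (htr u).differentiableAt
    have hz : ∀ u, deriv (fun u => (M u).trace) u = 0 := fun u => (htr u).deriv
    exact is_const_of_deriv_eq_zero hd hz t₁ t₂
  exact ⟨key _ hprod, key _ (fun t => matDeriv_pow (hK' t) s)⟩
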